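/- (Redundant-arc removal preserves the right-branch constraint) Let B ⊆ A be a set of arcs in an acyclic network, and let (u*,v) ∈ B be an arc such that every path from v⁺ to u* contains at least one arc of B. Then for every source-sink path p containing (u*,v), p contains at least two arcs of B; consequently, every integer flow satisfying Σ_{(u,v)∈B\{(u*,v)}} φ_{(u,v)} ≥ 1 is exactly the set of integer flows satisfying Σ_{(u,v)∈B} φ_{(u,v)} ≥ 1, i.e., removing (u*,v) from B does not change the set of integer solutions satisfying the branching constraint. -/

import Mathlib

/-- `IsPath A u p v` : `p` is a list of consecutive arcs of `A` from `u` to `v`. -/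
def IsPath {V : Type*} (A : Finset (V × V)) : V → List (V × V) → V → Prop
  | u, [], v => u = v
  | u, e :: rest, v => e.1 = u ∧ e ∈ A ∧ IsPath A e.2 rest v

lemma path_prefix {V : Type*} (A : Finset (V × V)) :
    ∀ (p1 : List (V × V)) (e : V × V) (p2 : List (V × V)) (u v : V),
    IsPath A u (p1 ++ e :: p2) v → IsPath A u p1 e.1
  | [], _, _, _, _, h => h.1.symm
  | a :: p1, e, p2, _, v, h => ⟨h.1, h.2.1, path_prefix A p1 e p2 a.2 v h.2.2⟩

lemma mem_split_first {α : Type*} [DecidableEq α] {a : α} :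
    ∀ {l : List α}, a ∈ l → ∃ s t, l = s ++ a :: t ∧ a ∉ s
  | [], h => absurd h (List.not_mem_nil (a := a))
  | b :: l, h => by
    by_cases hb : b = a
    · exact ⟨[], l, by simp [hb], by simp⟩
    · have h' : a ∈ l := by rcases List.mem_cons.1 h with h | h
                            · exact absurd h.symm hb
                            · exact h
      rcases mem_split_first h' with ⟨s, t, rfl, hns⟩
      exact ⟨b :: s, t, rfl, by simp [hns, Ne.symm hb]⟩

/-- Redundant-arc removal: if every path from the source to the tail of arc e₀ ∈ B meets B,
then every source-sink path through e₀ contains at least two arcs of B, and removing e₀ from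
B does not change the set of integer solutions satisfying the right-branch constraint. -/
theorem stmt_10 {V : Type*} [DecidableEq V] (A B : Finset (V × V)) (hBA : B ⊆ A)
    (vplus vminus : V) (e0 : V × V) (he0 : e0 ∈ B)
    (hred : ∀ p : List (V × V), IsPath A vplus p e0.1 → ∃ e ∈ p, e ∈ B) :
    (∀ p : List (V × V), IsPath A vplus p vminus → e0 ∈ p →
        2 ≤ p.countP (fun e => decide (e ∈ B))) ∧
    ∀ lam : (List (V × V)) →₀ ℕ,
      (∀ p ∈ lam.support, IsPath A vplus p vminus) →
      ((1 ≤ lam.sum fun p n => n * p.countP (fun e => decide (e ∈ B ∧ e ≠ e0))) ↔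
        (1 ≤ lam.sum fun p n => n * p.countP (fun e => decide (e ∈ B)))) := by
  -- key lemma: through e₀, there is another B-arc
  have key : ∀ p : List (V × V), IsPath A vplus p vminus → e0 ∈ p →
      1 ≤ p.countP (fun e => decide (e ∈ B ∧ e ≠ e0)) ∧
      2 ≤ p.countP (fun e => decide (e ∈ B)) := by
    intro p hp hmem
    obtain ⟨s, t, rfl, hns⟩ := mem_split_first hmem
    have hs : IsPath A vplus s e0.1 := path_prefix A s e0 t vplus vminus hp
    obtain ⟨e, hes, heB⟩ := hred s hs
    have hne : e ≠ e0 := fun h => hns (h ▸ hes)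
    constructor
    · rw [List.countP_append]
      have : 0 < s.countP (fun e => decide (e ∈ B ∧ e ≠ e0)) :=
        List.countP_pos_iff.2 ⟨e, hes, by simp [heB, hne]⟩
      omega
    · rw [List.countP_append, List.countP_cons]
      have h1 : 0 < s.countP (fun e => decide (e ∈ B)) :=
        List.countP_pos_iff.2 ⟨e, hes, by simp [heB]⟩
      have h2 : (if decide (e0 ∈ B) = true then 1 else 0) = 1 := by simp [he0]
      omega
  refine ⟨fun p hp hm => (key p hp hm).2, fun lam hlam => ?_⟩
  constructor
  · intro h
    refine le_trans h ?_
    rw [Finsupp.sum, Finsupp.sum]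
    refine Finset.sum_le_sum fun p _ => Nat.mul_le_mul_left _ ?_
    exact List.countP_mono_left fun e _ h' => by
      simp only [decide_eq_true_eq] at h' ⊢; exact h'.1
  · intro h
    have hne : (lam.sum fun p n => n * p.countP (fun e => decide (e ∈ B))) ≠ 0 := by omega
    rw [Finsupp.sum] at hne
    obtain ⟨p, hps, hp0⟩ := Finset.exists_ne_zero_of_sum_ne_zero hne
    have hlamp : lam p ≠ 0 := fun h => hp0 (by simp [h])
    have hcnt : 0 < p.countP (fun e => decide (e ∈ B)) := by
      rcases Nat.eq_zero_or_pos (p.countP (fun e => decide (e ∈ B))) with h | h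
      · exact absurd (by simp [h]) hp0
      · exact h
    obtain ⟨e, hep, heB⟩ := List.countP_pos_iff.1 hcnt
    simp only [decide_eq_true_eq] at heB
    have hres : 1 ≤ p.countP (fun e => decide (e ∈ B ∧ e ≠ e0)) := by
      by_cases hee : e = e0
      · exact (key p (hlam p hps) (hee ▸ hep)).1
      · exact List.countP_pos_iff.2 ⟨e, hep, by simp [heB, hee]⟩
    calc 1 ≤ lam p * p.countP (fun e => decide (e ∈ B ∧ e ≠ e0)) :=
          Nat.one_le_iff_ne_zero.2 (Nat.mul_ne_zero hlamp (by omega))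
      _ ≤ _ := by
          rw [Finsupp.sum]
          exact Finset.single_le_sum (f := fun q => lam q * q.countP (fun e => decide (e ∈ B ∧ e ≠ e0))) (fun i _ => Nat.zero_le _) hps
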